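/- For any integers n, m ≥ 4 there exists an oriented graph G = (V, E) with |V| = n and |E| = m, isomorphic to a triploid T(n₁, n₂, n₃, n₀, e) for some non-negative integers n₁, n₂, n₃, n₀, e, such that 𝔯𝔥(G) + 𝔏(G) ≥ 2⁻¹⁴ · (min(m, n²) · min(m, n) + m) and 𝔯𝔥(G) ≥ 2⁻¹⁴ · (min(m, n²) · min(m, n)). -/

import Mathlib

/-- An oriented graph: finite nonempty sets of vertices and edges with
origin and tail maps. -/
structure OrientedGraph where
  V : Type
  E : Type
  [fintypeV : Fintype V]
  [fintypeE : Fintype E]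
  [nonemptyV : Nonempty V]
  [nonemptyE : Nonempty E]
  o : E → V
  t : E → V

attribute [instance] OrientedGraph.fintypeV OrientedGraph.fintypeE
  OrientedGraph.nonemptyV OrientedGraph.nonemptyE

namespace OrientedGraph

variable (G : OrientedGraph)

/-- `G.IsPath p u v` : the edge sequence `p` is a path from `u` to `v`
(consecutive edges are composable; paths of length 0 at any vertex are allowed). -/
def IsPath (p : List G.E) (u v : G.V) : Prop :=
  List.Chain' (fun e f => G.t e = G.o f) p ∧
  ((p = [] ∧ u = v) ∨
    ∃ h : p ≠ [], u = G.o (p.head h) ∧ v = G.t (p.getLast h))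

/-- The label of an edge sequence: the product of the labels of its edges
(the empty sequence maps to `1`). -/
def labelProd {M : Type} [Monoid M] (l : G.E → M) (s : List G.E) : M :=
  (s.map l).prod

/-- The diagram `(G, l)` is commutative: any two paths with the same origin and
the same tail have equal labels. -/
def IsCommutative {M : Type} [Monoid M] (l : G.E → M) : Prop :=
  ∀ (u v : G.V) (p₁ p₂ : List G.E),
    G.IsPath p₁ u v → G.IsPath p₂ u v → G.labelProd l p₁ = G.labelProd l p₂

/-- A complete system of relations for `G`: for every monoid `M` and every
labeling `l : E → M`, the diagram `(G, l)` is commutative iff all relations hold. -/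
def IsComplete (R : Finset (List G.E × List G.E)) : Prop :=
  ∀ (M : Type) [Monoid M], ∀ l : G.E → M,
    G.IsCommutative l ↔ ∀ r ∈ R, G.labelProd l r.1 = G.labelProd l r.2

/-- A minimal complete system of relations: no proper subset is complete. -/
def IsMinimalComplete (R : Finset (List G.E × List G.E)) : Prop :=
  G.IsComplete R ∧ ∀ R' : Finset (List G.E × List G.E), R' ⊂ R → ¬ G.IsComplete R'

/-- The commutativity rank `η(G)`: the minimal cardinality of a complete
system of relations for `G`. -/
noncomputable def eta : ℕ :=
  sInf {n : ℕ | ∃ R : Finset (List G.E × List G.E), G.IsComplete R ∧ R.card = n}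

/-- `S'` is obtained from `S` by one multiplication. -/
def MulStep (S S' : Set (List G.E)) : Prop :=
  ∃ s ∈ S, ∃ s' ∈ S, S' = S ∪ {s ++ s'}

/-- `G.mCost S S'` : the minimal number of multiplications needed to obtain `S'`
from `S` (`⊤` if impossible). -/
noncomputable def mCost (S S' : Set (List G.E)) : ℕ∞ :=
  sInf {k : ℕ∞ | ∃ n : ℕ, k = n ∧ ∃ f : ℕ → Set (List G.E),
    f 0 = S ∧ f n = S' ∧ ∀ i < n, G.MulStep (f i) (f (i + 1))}

/-- `S_R`: the set of all edge sequences appearing in the relations of `R`. -/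
def relSet (R : Finset (List G.E × List G.E)) : Set (List G.E) :=
  {s | ∃ r ∈ R, s = r.1 ∨ s = r.2}

/-- `ℰ`: the empty sequence together with all one-edge sequences. -/
def baseSet : Set (List G.E) :=
  {s | s = [] ∨ ∃ e : G.E, s = [e]}

/-- `m(R)`: the minimal number of multiplications needed to build all sequences
appearing in `R`, starting from `ℰ`. -/
noncomputable def mRel (R : Finset (List G.E × List G.E)) : ℕ∞ :=
  sInf {k : ℕ∞ | ∃ S : Set (List G.E), G.relSet R ⊆ S ∧ k = G.mCost G.baseSet S}

/-- The multiplication rank `ν(G)`. -/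
noncomputable def nu : ℕ∞ :=
  sInf {k : ℕ∞ | ∃ R : Finset (List G.E × List G.E), G.IsComplete R ∧ k = G.mRel R}

/-- A 4-tuple of edges `(a, b, c, d)` forms a rhomboid. -/
def IsRhomboid (r : G.E × G.E × G.E × G.E) : Prop :=
  G.o r.1 = G.o r.2.2.1 ∧ G.t r.2.1 = G.t r.2.2.2 ∧
  G.t r.1 = G.o r.2.1 ∧ G.t r.2.2.1 = G.o r.2.2.2 ∧
  G.o r.1 ≠ G.t r.1 ∧ G.o r.1 ≠ G.o r.2.2.2 ∧ G.o r.1 ≠ G.t r.2.2.2 ∧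
  G.t r.1 ≠ G.o r.2.2.2 ∧ G.t r.1 ≠ G.t r.2.2.2 ∧ G.o r.2.2.2 ≠ G.t r.2.2.2

/-- Two rhomboids `(a, b, c, d)` and `(a', b', c', d')` are disjoint. -/
def RhDisjoint (r r' : G.E × G.E × G.E × G.E) : Prop :=
  (r.1 ≠ r'.1 ∨ r.2.1 ≠ r'.2.1) ∧
  (r.1 ≠ r'.2.2.1 ∨ r.2.1 ≠ r'.2.2.2) ∧
  (r.2.2.1 ≠ r'.2.2.1 ∨ r.2.2.2 ≠ r'.2.2.2) ∧
  (r.2.2.1 ≠ r'.1 ∨ r.2.2.2 ≠ r'.2.1)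

/-- `𝔯𝔥(G)`: the maximal cardinality of a family of pairwise disjoint rhomboids in `G`. -/
noncomputable def rhNum : ℕ :=
  sSup {n : ℕ | ∃ F : Finset (G.E × G.E × G.E × G.E),
    (∀ r ∈ F, G.IsRhomboid r) ∧
    (∀ r ∈ F, ∀ r' ∈ F, r ≠ r' → G.RhDisjoint r r') ∧ F.card = n}

/-- `𝔏(G)`: the number of loops of `G`. -/
noncomputable def loopCount : ℕ :=
  Nat.card {e : G.E // G.o e = G.t e}

/-- `G` is quasi-acyclic: no directed cycle visiting two or more distinct vertices. -/
def QuasiAcyclic : Prop :=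
  ∀ u v : G.V, u ≠ v →
    ∀ p q : List G.E, G.IsPath p u v → G.IsPath q v u → False

/-- `G` is 2-path-bounded: every oriented path avoiding loop edges has length at most 2. -/
def TwoPathBounded : Prop :=
  ∀ (p : List G.E) (u v : G.V), G.IsPath p u v →
    (∀ e ∈ p, G.o e ≠ G.t e) → p.length ≤ 2

/-- `G` has a pair of multiple edges. -/
def HasMultipleEdges : Prop :=
  ∃ e e' : G.E, e ≠ e' ∧ G.t e = G.t e' ∧ G.o e = G.o e' ∧ G.t e ≠ G.o e

/-- `G` has a triangle. -/
def HasTriangle : Prop :=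
  ∃ a b c : G.E, G.o a = G.o b ∧ G.t b = G.o c ∧ G.t c = G.t a ∧
    G.o a ≠ G.t a ∧ G.o b ≠ G.t b ∧ G.o c ≠ G.t c

/-- `G` has no loops. -/
def NoLoops : Prop := ∀ e : G.E, G.o e ≠ G.t e

/-- Every edge occurring on either side of the relation `r` is a loop. -/
def AllLoops (r : List G.E × List G.E) : Prop :=
  (∀ e ∈ r.1, G.o e = G.t e) ∧ (∀ e ∈ r.2, G.o e = G.t e)

/-- Both sides of the relation `r` contain at least one non-loop edge. -/
def BothSidesNonLoop (r : List G.E × List G.E) : Prop :=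
  (∃ e ∈ r.1, G.o e ≠ G.t e) ∧ (∃ e ∈ r.2, G.o e ≠ G.t e)

end OrientedGraph

/-- The triploid `T(n₁, n₂, n₃, n₀, e)`. -/
def Triploid (n₁ n₂ n₃ n₀ e : ℕ) (hn₁ : 0 < n₁) (he : n₂ * (n₁ + n₃) ≤ e)
    (he₀ : 0 < e) : OrientedGraph where
  V := Fin n₀ ⊕ Fin n₁ ⊕ Fin n₂ ⊕ Fin n₃
  E := (Fin n₁ × Fin n₂) ⊕ (Fin n₂ × Fin n₃) ⊕ Fin (e - n₂ * (n₁ + n₃))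
  nonemptyV := ⟨Sum.inr (Sum.inl ⟨0, hn₁⟩)⟩
  nonemptyE := by
    by_cases h : n₂ * (n₁ + n₃) < e
    · exact ⟨Sum.inr (Sum.inr ⟨0, by omega⟩)⟩
    · have h2 : 0 < n₂ := by
        rcases Nat.eq_zero_or_pos n₂ with h0 | h0
        · exfalso; subst h0; simp at h; omega
        · exact h0
      exact ⟨Sum.inl (⟨0, hn₁⟩, ⟨0, h2⟩)⟩
  o := Sum.elim (fun p => Sum.inr (Sum.inl p.1))
        (Sum.elim (fun p => Sum.inr (Sum.inr (Sum.inl p.1)))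
          (fun _ => Sum.inr (Sum.inl ⟨0, hn₁⟩)))
  t := Sum.elim (fun p => Sum.inr (Sum.inr (Sum.inl p.2)))
        (Sum.elim (fun p => Sum.inr (Sum.inr (Sum.inr p.2)))
          (fun _ => Sum.inr (Sum.inl ⟨0, hn₁⟩)))

lemma arith (n m : ℕ) (hn : 4 ≤ n) (hm : 4 ≤ m) :
    ∃ t s : ℕ, 1 ≤ t ∧ 2 ≤ s ∧ 2*t + s ≤ n ∧ 2*t*s ≤ m ∧
      min m (n^2) * min m n ≤ 2^14 * (t*t*(s/2)) ∧
      min m (n^2) * min m n + m ≤ 2^14 * (t*t*(s/2) + (m - 2*t*s)) := by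
  rcases le_or_gt m n with h | h
  · -- m ≤ n : t = m/4, s = 2
    have hmn2 : m ≤ n^2 := h.trans (by nlinarith)
    refine ⟨m/4, 2, by omega, le_refl 2, by omega, by omega, ?_, ?_⟩
    · rw [min_eq_left hmn2, min_eq_left h]
      have ht : m ≤ 8*(m/4) := by omega
      norm_num
      nlinarith
    · rw [min_eq_left hmn2, min_eq_left h]
      have ht : m ≤ 8*(m/4) := by omega
      have h2 : 2*(m/4)*2 ≤ m := by omega
      norm_num
      nlinarith [Nat.sub_le m (2*(m/4)*2)]
  · -- n < m
    set c := min m (n^2) with hc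
    have hcm : c ≤ m := min_le_left _ _
    have hcn2 : c ≤ n^2 := min_le_right _ _
    have hnc : n ≤ c := le_min (le_of_lt h) (by nlinarith)
    rw [min_eq_right h.le]
    set t := n/4 with htdef
    have ht1 : 1 ≤ t := by omega
    have ht2 : n ≤ 8*t := by omega
    have ht3 : 4*t ≤ n := by omega
    set s2 := c/(2*n) with hs2def
    obtain ⟨r, hrlt, hdm⟩ : ∃ r, r < 2*n ∧ 2*n*s2 + r = c :=
      ⟨c % (2*n), Nat.mod_lt _ (by omega), by rw [hs2def]; exact Nat.div_add_mod c (2*n)⟩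
    clear_value t s2 c
    clear hs2def htdef hc
    have hcn1 : c ≤ c*n := Nat.le_mul_of_pos_right c (by omega)
    rcases le_or_gt s2 2 with hs | hs
    · -- s = 2
      have hc6 : c ≤ 6*n := by nlinarith [Nat.mul_le_mul_left (2*n) hs]
      have hkey : c*n ≤ 384*(t*t) := by
        calc c*n ≤ (6*n)*n := Nat.mul_le_mul_right n hc6
          _ ≤ 6*((8*t)*(8*t)) := by nlinarith [Nat.mul_le_mul ht2 ht2]
          _ = 384*(t*t) := by ring
      refine ⟨t, 2, ht1, le_refl 2, by omega, by omega, ?_, ?_⟩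
      · norm_num; linarith
      · have hL : 2*t*2 + (m - 2*t*2) = m := by omega
        have hB : 2*t*2 ≤ n := by omega
        norm_num
        linarith
    · -- s = s2 ≥ 3
      have h2ns : 2*n*s2 ≤ c := by linarith
      have hs2n : 2*s2 ≤ n := by
        have h1 : n*(2*s2) ≤ n*n := by nlinarith
        exact Nat.le_of_mul_le_mul_left h1 (by omega)
      have hc4 : c ≤ 4*n*s2 := by nlinarith [Nat.mul_le_mul_left (2*n) (show 1 ≤ s2 by omega)]
      have hB : 4*(2*t*s2) ≤ c := by nlinarith [Nat.mul_le_mul_right (2*s2) ht3]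
      have hq : s2 ≤ 4*(s2/2) := by omega
      have hkey : c*n ≤ 1024*(t*t*(s2/2)) := by
        calc c*n ≤ (4*n*s2)*n := Nat.mul_le_mul_right n hc4
          _ ≤ (4*n*(4*(s2/2)))*n := Nat.mul_le_mul_right n (Nat.mul_le_mul_left (4*n) hq)
          _ = 16*(n*n)*(s2/2) := by ring
          _ ≤ 16*((8*t)*(8*t))*(s2/2) := Nat.mul_le_mul_right (s2/2) (Nat.mul_le_mul_left 16 (Nat.mul_le_mul ht2 ht2))
          _ = 1024*(t*t*(s2/2)) := by ring
      refine ⟨t, s2, ht1, by omega, by omega, by linarith, ?_, ?_⟩  -- ok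
      · linarith
      · have hBm : 2*t*s2 ≤ m := by linarith
        have hL : 2*t*s2 + (m - 2*t*s2) = m := Nat.add_sub_cancel' hBm
        linarith

section Aux0
variable (t s n₀ m : ℕ) (ht : 0 < t) (he : s * (t + t) ≤ m) (he₀ : 0 < m)

lemma triploid_card_V :
    Fintype.card (Triploid t s t n₀ m ht he he₀).V = n₀ + t + s + t := by
  show Fintype.card (Fin n₀ ⊕ Fin t ⊕ Fin s ⊕ Fin t) = n₀ + t + s + t
  simp [Fintype.card_sum]
  ring

lemma triploid_card_E :
    Fintype.card (Triploid t s t n₀ m ht he he₀).E = m := by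
  show Fintype.card ((Fin t × Fin s) ⊕ (Fin s × Fin t) ⊕ Fin (m - s*(t+t))) = m
  simp [Fintype.card_sum]
  have : t*s + s*t = s*(t+t) := by ring
  omega

lemma triploid_loops :
    m - s*(t+t) ≤ (Triploid t s t n₀ m ht he he₀).loopCount := by
  set G := Triploid t s t n₀ m ht he he₀ with hG
  have : Function.Injective (fun k : Fin (m - s*(t+t)) =>
      (⟨Sum.inr (Sum.inr k), rfl⟩ : {e : G.E // G.o e = G.t e})) := by
    intro a b hab
    have h2 := congrArg Subtype.val hab
    exact Sum.inr_injective (Sum.inr_injective h2)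
  calc m - s*(t+t) = Nat.card (Fin (m - s*(t+t))) := by simp
    _ ≤ Nat.card {e : G.E // G.o e = G.t e} := Nat.card_le_card_of_injective _ this

end Aux0

section RhMap
variable {t s k : ℕ} {α : Type}

/-- The rhomboid family map. -/
def rhMap (h : 2*k ≤ s) (x : Fin t × Fin t × Fin k) :
    (((Fin t × Fin s) ⊕ (Fin s × Fin t) ⊕ α) × ((Fin t × Fin s) ⊕ (Fin s × Fin t) ⊕ α) ×
     ((Fin t × Fin s) ⊕ (Fin s × Fin t) ⊕ α) × ((Fin t × Fin s) ⊕ (Fin s × Fin t) ⊕ α)) :=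
  (Sum.inl (x.1, ⟨2*x.2.2.1, by have := x.2.2.isLt; omega⟩),
   Sum.inr (Sum.inl (⟨2*x.2.2.1, by have := x.2.2.isLt; omega⟩, x.2.1)),
   Sum.inl (x.1, ⟨2*x.2.2.1+1, by have := x.2.2.isLt; omega⟩),
   Sum.inr (Sum.inl (⟨2*x.2.2.1+1, by have := x.2.2.isLt; omega⟩, x.2.1)))

lemma rhMap_inj (h : 2*k ≤ s) : Function.Injective (rhMap (t := t) (α := α) h) := by
  rintro ⟨i, j, w⟩ ⟨i', j', w'⟩ hab
  simp only [rhMap, Prod.mk.injEq, Sum.inl.injEq, Sum.inr.injEq, Fin.mk.injEq] at hab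
  obtain ⟨⟨h1, h2⟩, ⟨h3, h4⟩, -⟩ := hab
  simp only [Prod.mk.injEq]
  exact ⟨h1, h4, Fin.ext (by omega)⟩

end RhMap

lemma triploid_rh (t s n₀ m : ℕ) (ht : 0 < t) (he : s * (t + t) ≤ m) (he₀ : 0 < m)
    (hs : 2 ≤ s) :
    t*t*(s/2) ≤ (Triploid t s t n₀ m ht he he₀).rhNum := by
  classical
  set G := Triploid t s t n₀ m ht he he₀ with hG
  have hks : 2*(s/2) ≤ s := by omega
  let f : Fin t × Fin t × Fin (s/2) → G.E × G.E × G.E × G.E :=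
    rhMap (α := Fin (m - s*(t+t))) hks
  have hinj : Function.Injective f := rhMap_inj hks
  have hbdd : BddAbove {k : ℕ | ∃ F : Finset (G.E × G.E × G.E × G.E),
      (∀ r ∈ F, G.IsRhomboid r) ∧
      (∀ r ∈ F, ∀ r' ∈ F, r ≠ r' → G.RhDisjoint r r') ∧ F.card = k} := by
    refine ⟨Fintype.card (G.E × G.E × G.E × G.E), ?_⟩
    rintro k ⟨F, -, -, rfl⟩
    exact (Finset.card_le_univ F).trans (le_of_eq Finset.card_univ)
  have hmem : t*t*(s/2) ∈ {k : ℕ | ∃ F : Finset (G.E × G.E × G.E × G.E),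
      (∀ r ∈ F, G.IsRhomboid r) ∧
      (∀ r ∈ F, ∀ r' ∈ F, r ≠ r' → G.RhDisjoint r r') ∧ F.card = k} := by
    refine ⟨Finset.image f Finset.univ, ?_, ?_, ?_⟩
    · rintro r hr
      obtain ⟨x, -, rfl⟩ := Finset.mem_image.mp hr
      obtain ⟨i, j, w⟩ := x
      refine ⟨rfl, rfl, rfl, rfl, ?_, ?_, ?_, ?_, ?_, ?_⟩
      · intro hcon; have hc := Sum.inr_injective hcon; exact Sum.inl_ne_inr hc
      · intro hcon; have hc := Sum.inr_injective hcon; exact Sum.inl_ne_inr hc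
      · intro hcon; have hc := Sum.inr_injective hcon; exact Sum.inl_ne_inr hc
      · intro hcon
        have h2 := Sum.inl_injective (Sum.inr_injective (Sum.inr_injective hcon))
        have h3 := congrArg Fin.val h2
        simp only [] at h3
        omega
      · intro hcon; have hc := Sum.inr_injective (Sum.inr_injective hcon); exact Sum.inl_ne_inr hc
      · intro hcon; have hc := Sum.inr_injective (Sum.inr_injective hcon); exact Sum.inl_ne_inr hc
    · rintro r hr r' hr' hne
      obtain ⟨x, -, rfl⟩ := Finset.mem_image.mp hr
      obtain ⟨x', -, rfl⟩ := Finset.mem_image.mp hr'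
      have hxx : x ≠ x' := fun hcon => hne (by rw [hcon])
      obtain ⟨i, j, w⟩ := x
      obtain ⟨i', j', w'⟩ := x'
      refine ⟨?_, Or.inl ?_, ?_, Or.inl ?_⟩
      · rcases eq_or_ne w w' with hw | hw
        · subst hw
          rcases eq_or_ne i i' with hi | hi
          · subst hi
            have hj : j ≠ j' := by
              intro hcon; exact hxx (by rw [hcon])
            exact Or.inr (by
              intro hcon
              exact hj (congrArg Prod.snd (Sum.inl_injective (Sum.inr_injective hcon))))
          · exact Or.inl (by
              intro hcon
              exact hi (congrArg Prod.fst (Sum.inl_injective hcon)))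
        · exact Or.inl (by
            intro hcon
            have h2 := congrArg Fin.val (congrArg Prod.snd (Sum.inl_injective hcon))
            simp only [] at h2
            exact hw (Fin.ext (by omega)))
      · intro hcon
        have h2 := congrArg Fin.val (congrArg Prod.snd (Sum.inl_injective hcon))
        simp only [] at h2
        omega
      · rcases eq_or_ne w w' with hw | hw
        · subst hw
          rcases eq_or_ne i i' with hi | hi
          · subst hi
            have hj : j ≠ j' := by
              intro hcon; exact hxx (by rw [hcon])
            exact Or.inr (by
              intro hcon
              exact hj (congrArg Prod.snd (Sum.inl_injective (Sum.inr_injective hcon))))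
          · exact Or.inl (by
              intro hcon
              exact hi (congrArg Prod.fst (Sum.inl_injective hcon)))
        · exact Or.inl (by
            intro hcon
            have h2 := congrArg Fin.val (congrArg Prod.snd (Sum.inl_injective hcon))
            simp only [] at h2
            exact hw (Fin.ext (by omega)))
      · intro hcon
        have h2 := congrArg Fin.val (congrArg Prod.snd (Sum.inl_injective hcon))
        simp only [] at h2
        omega
    · rw [Finset.card_image_of_injective _ hinj]
      simp [Fintype.card_fin]
      ring
  exact le_csSup hbdd hmem


/-- Theorem: for any `n, m ≥ 4` there exists a graph with `n` vertices and `m` edges,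
isomorphic to a triploid, such that `𝔯𝔥(G) + 𝔏(G) ≥ 2⁻¹⁴·(min(m,n²)·min(m,n) + m)`
and `𝔯𝔥(G) ≥ 2⁻¹⁴·(min(m,n²)·min(m,n))`. -/
theorem triploid_lower_bound (n m : ℕ) (hn : 4 ≤ n) (hm : 4 ≤ m) :
    ∃ G : OrientedGraph,
      (∃ (n₁ n₂ n₃ n₀ e : ℕ) (hn₁ : 0 < n₁) (he : n₂ * (n₁ + n₃) ≤ e) (he₀ : 0 < e),
        G = Triploid n₁ n₂ n₃ n₀ e hn₁ he he₀) ∧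
      Fintype.card G.V = n ∧ Fintype.card G.E = m ∧
      min m (n ^ 2) * min m n + m ≤ 2 ^ 14 * (G.rhNum + G.loopCount) ∧
      min m (n ^ 2) * min m n ≤ 2 ^ 14 * G.rhNum := by
  obtain ⟨t, s, ht1, hs2, htn, htm, hineq2, hineq1⟩ := arith n m hn hm
  have ht : 0 < t := ht1
  have he : s * (t + t) ≤ m := by
    calc s * (t + t) = 2*t*s := by ring
      _ ≤ m := htm
  have he₀ : 0 < m := by omega
  have h1 := triploid_rh t s (n - (2*t+s)) m ht he he₀ hs2
  have h2 := triploid_loops t s (n - (2*t+s)) m ht he he₀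
  have h3 : m - s*(t+t) = m - 2*t*s := by rw [show s*(t+t) = 2*t*s from by ring]
  rw [h3] at h2
  refine ⟨Triploid t s t (n - (2*t+s)) m ht he he₀,
    ⟨t, s, t, n - (2*t+s), m, ht, he, he₀, rfl⟩, ?_, triploid_card_E t s _ m ht he he₀, ?_, ?_⟩
  · rw [triploid_card_V]; omega
  · calc min m (n ^ 2) * min m n + m ≤ 2^14 * (t*t*(s/2) + (m - 2*t*s)) := hineq1
      _ ≤ 2^14 * ((Triploid t s t (n - (2*t+s)) m ht he he₀).rhNum +
            (Triploid t s t (n - (2*t+s)) m ht he he₀).loopCount) :=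
        Nat.mul_le_mul_left _ (Nat.add_le_add h1 h2)
  · calc min m (n ^ 2) * min m n ≤ 2^14 * (t*t*(s/2)) := hineq2
      _ ≤ 2^14 * (Triploid t s t (n - (2*t+s)) m ht he he₀).rhNum :=
        Nat.mul_le_mul_left _ h1
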